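/- Let H ∈ ℝ^{n×r}, l ∈ {1,…,r}, k ∈ {1,…,n}, and P = A − ∑_{t≠l} H_{:,t}H_{:,t}ᵀ where A is symmetric. Then b_k := hᵀP_{:,k} − h_k P_{kk} with h = H_{:,l} satisfies b_k = H_{:,l}ᵀ A_{:,k} − H_{:,l}ᵀ(HHᵀ)_{:,k} − H_{k,l}(A_{kk} + H_{k,l}² − ‖H_{:,l}‖₂² − ‖H_{k,:}‖₂²). -/

import Mathlib

theorem stmt19 (n r : ℕ) (A : Matrix (Fin n) (Fin n) ℝ) (hsym : A.IsSymm)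
    (H : Matrix (Fin n) (Fin r) ℝ) (l : Fin r) (k : Fin n)
    (P : Matrix (Fin n) (Fin n) ℝ)
    (hPdef : ∀ s t, P s t = A s t - ∑ u ∈ Finset.univ \ {l}, H s u * H t u) :
    (∑ i, H i l * P i k) - H k l * P k k =
      (∑ i, H i l * A i k) - (∑ i, H i l * (H * H.transpose) i k) -
        H k l * (A k k + H k l ^ 2 - (∑ i, H i l ^ 2) - (∑ t, H k t ^ 2)) := by
  have key : ∀ s, ∑ u ∈ Finset.univ \ {l}, H s u * H k u =
      (∑ u, H s u * H k u) - H s l * H k l := by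
    intro s
    rw [Finset.sum_sdiff_eq_sub (Finset.subset_univ _)]
    simp
  simp only [hPdef, key, Matrix.mul_apply, Matrix.transpose_apply, mul_sub,
    Finset.sum_sub_distrib, Finset.mul_sum]
  simp only [pow_two, mul_comm, mul_left_comm]
  ring
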